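/- For i = 1, 2, the absolute value of the Jacobian determinant of the map ψ_i at a point (x1, x2, x3) ∈ H equals 1/((1-x_i)(x_i - x1·x2 + x3)). -/

import Mathlib

open Set

/-- The set `H = {(x₁,x₂,x₃) ∈ (0,∞)³ : min{x₁x₂, (1-x₁)(1-x₂)} > x₃}`. -/
def setH : Set (ℝ × ℝ × ℝ) :=
  {x | 0 < x.1 ∧ 0 < x.2.1 ∧ 0 < x.2.2 ∧
    x.2.2 < x.1 * x.2.1 ∧ x.2.2 < (1 - x.1) * (1 - x.2.1)}

/-- The map `ψ₁`. -/
noncomputable def psi1 (x : ℝ × ℝ × ℝ) : ℝ × ℝ × ℝ :=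
  (x.1, (x.1 * x.2.1 - x.2.2) / x.1,
   x.2.2 / ((1 - x.1) * (x.1 - x.1 * x.2.1 + x.2.2)))

/-- The map `ψ₂`. -/
noncomputable def psi2 (x : ℝ × ℝ × ℝ) : ℝ × ℝ × ℝ :=
  (x.2.1, (x.1 * x.2.1 - x.2.2) / x.2.1,
   x.2.2 / ((1 - x.2.1) * (x.2.1 - x.1 * x.2.1 + x.2.2)))

/-- The coordinate linear equivalence `ℝ × ℝ × ℝ ≃ₗ Fin 3 → ℝ`. -/
noncomputable def eFin3 : (ℝ × ℝ × ℝ) ≃ₗ[ℝ] (Fin 3 → ℝ) where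
  toFun x := ![x.1, x.2.1, x.2.2]
  invFun v := (v 0, v 1, v 2)
  map_add' x y := by funext i; fin_cases i <;> simp
  map_smul' r x := by funext i; fin_cases i <;> simp
  left_inv x := rfl
  right_inv v := by funext i; fin_cases i <;> rfl

/-- The corresponding basis of `ℝ × ℝ × ℝ`. -/
noncomputable def B3 : Module.Basis (Fin 3) ℝ (ℝ × ℝ × ℝ) := Module.Basis.ofEquivFun eFin3

lemma eFin3_apply (x : ℝ × ℝ × ℝ) : eFin3 x = ![x.1, x.2.1, x.2.2] := rfl

lemma eFin3_symm_apply (v : Fin 3 → ℝ) : eFin3.symm v = (v 0, v 1, v 2) := rfl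

set_option maxHeartbeats 1000000 in
lemma det_psi1 (a b c : ℝ) (ha : a ≠ 0) (hD : (1-a)*(a - a*b + c) ≠ 0) :
    LinearMap.det ((fderiv ℝ psi1 ((a,b,c) : ℝ × ℝ × ℝ)) : (ℝ × ℝ × ℝ) →ₗ[ℝ] (ℝ × ℝ × ℝ))
      = 1/((1-a)*(a - a*b + c)) := by
  have hinv1 : HasFDerivAt (𝕜 := ℝ) (fun x : ℝ × ℝ × ℝ => (x.1)⁻¹) _ ((a,b,c) : ℝ × ℝ × ℝ) :=
    (hasFDerivAt_inv (by exact ha)).comp _ hasFDerivAt_fst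
  have hnum : HasFDerivAt (𝕜 := ℝ) (fun x : ℝ × ℝ × ℝ => x.1 * x.2.1 - x.2.2) _
      ((a,b,c) : ℝ × ℝ × ℝ) :=
    (hasFDerivAt_fst.mul hasFDerivAt_snd.fst).sub hasFDerivAt_snd.snd
  have h2 : HasFDerivAt (𝕜 := ℝ) (fun x : ℝ × ℝ × ℝ => (x.1 * x.2.1 - x.2.2) * (x.1)⁻¹) _
      ((a,b,c) : ℝ × ℝ × ℝ) := hnum.mul hinv1
  have hden : HasFDerivAt (𝕜 := ℝ) (fun x : ℝ × ℝ × ℝ =>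
      ((1 - x.1) * (x.1 - x.1 * x.2.1 + x.2.2))) _ ((a,b,c) : ℝ × ℝ × ℝ) :=
    ((hasFDerivAt_const (1:ℝ) _).sub hasFDerivAt_fst).mul
      ((hasFDerivAt_fst.sub (hasFDerivAt_fst.mul hasFDerivAt_snd.fst)).add hasFDerivAt_snd.snd)
  have hinv3 : HasFDerivAt (𝕜 := ℝ) (fun x : ℝ × ℝ × ℝ =>
      ((1 - x.1) * (x.1 - x.1 * x.2.1 + x.2.2))⁻¹) _ ((a,b,c) : ℝ × ℝ × ℝ) :=
    (hasFDerivAt_inv (by exact hD)).comp _ hden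
  have h3 : HasFDerivAt (𝕜 := ℝ) (fun x : ℝ × ℝ × ℝ =>
      x.2.2 * ((1 - x.1) * (x.1 - x.1 * x.2.1 + x.2.2))⁻¹) _ ((a,b,c) : ℝ × ℝ × ℝ) :=
    hasFDerivAt_snd.snd.mul hinv3
  have H := hasFDerivAt_fst.prodMk (h2.prodMk h3)
  have hpsi : psi1 = fun x : ℝ × ℝ × ℝ =>
      (x.1, ((x.1 * x.2.1 - x.2.2) * (x.1)⁻¹,
        x.2.2 * ((1 - x.1) * (x.1 - x.1 * x.2.1 + x.2.2))⁻¹)) := by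
    funext x; simp [psi1, div_eq_mul_inv]
  rw [hpsi, H.fderiv, ← LinearMap.det_toMatrix B3, Matrix.det_fin_three]
  simp only [LinearMap.toMatrix_apply, B3, Module.Basis.ofEquivFun_repr_apply, Module.Basis.coe_ofEquivFun,
    eFin3_apply, eFin3_symm_apply, LinearEquiv.coe_mk, LinearEquiv.coe_symm_mk, ContinuousLinearMap.coe_coe,
    ContinuousLinearMap.prod_apply, ContinuousLinearMap.add_apply, ContinuousLinearMap.sub_apply,
    ContinuousLinearMap.smul_apply, ContinuousLinearMap.comp_apply,
    ContinuousLinearMap.coe_fst', ContinuousLinearMap.coe_snd',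
    ContinuousLinearMap.smulRight_apply, ContinuousLinearMap.one_apply,
    ContinuousLinearMap.zero_apply, Pi.single_apply, Matrix.cons_val_zero,
    Matrix.cons_val_one, Matrix.cons_val_two, Matrix.head_cons, Matrix.vecTail, Matrix.vecHead,
    smul_eq_mul, Prod.fst, Prod.snd]
  norm_num [Fin.ext_iff]
  obtain ⟨h1a, h2a⟩ := mul_ne_zero_iff.mp hD
  have : a * (1 - b) + c ≠ 0 := by intro h; apply h2a; linarith
  field_simp
  ring

set_option maxHeartbeats 1000000 in
lemma det_psi2 (a b c : ℝ) (hb : b ≠ 0) (hD : (1-b)*(b - a*b + c) ≠ 0) :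
    LinearMap.det ((fderiv ℝ psi2 ((a,b,c) : ℝ × ℝ × ℝ)) : (ℝ × ℝ × ℝ) →ₗ[ℝ] (ℝ × ℝ × ℝ))
      = -(1/((1-b)*(b - a*b + c))) := by
  have hinv1 : HasFDerivAt (𝕜 := ℝ) (fun x : ℝ × ℝ × ℝ => (x.2.1)⁻¹) _ ((a,b,c) : ℝ × ℝ × ℝ) :=
    (hasFDerivAt_inv (by exact hb)).comp _ hasFDerivAt_snd.fst
  have hnum : HasFDerivAt (𝕜 := ℝ) (fun x : ℝ × ℝ × ℝ => x.1 * x.2.1 - x.2.2) _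
      ((a,b,c) : ℝ × ℝ × ℝ) :=
    (hasFDerivAt_fst.mul hasFDerivAt_snd.fst).sub hasFDerivAt_snd.snd
  have h2 : HasFDerivAt (𝕜 := ℝ) (fun x : ℝ × ℝ × ℝ => (x.1 * x.2.1 - x.2.2) * (x.2.1)⁻¹) _
      ((a,b,c) : ℝ × ℝ × ℝ) := hnum.mul hinv1
  have hden : HasFDerivAt (𝕜 := ℝ) (fun x : ℝ × ℝ × ℝ =>
      ((1 - x.2.1) * (x.2.1 - x.1 * x.2.1 + x.2.2))) _ ((a,b,c) : ℝ × ℝ × ℝ) :=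
    ((hasFDerivAt_const (1:ℝ) _).sub hasFDerivAt_snd.fst).mul
      ((hasFDerivAt_snd.fst.sub (hasFDerivAt_fst.mul hasFDerivAt_snd.fst)).add hasFDerivAt_snd.snd)
  have hinv3 : HasFDerivAt (𝕜 := ℝ) (fun x : ℝ × ℝ × ℝ =>
      ((1 - x.2.1) * (x.2.1 - x.1 * x.2.1 + x.2.2))⁻¹) _ ((a,b,c) : ℝ × ℝ × ℝ) :=
    (hasFDerivAt_inv (by exact hD)).comp _ hden
  have h3 : HasFDerivAt (𝕜 := ℝ) (fun x : ℝ × ℝ × ℝ =>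
      x.2.2 * ((1 - x.2.1) * (x.2.1 - x.1 * x.2.1 + x.2.2))⁻¹) _ ((a,b,c) : ℝ × ℝ × ℝ) :=
    hasFDerivAt_snd.snd.mul hinv3
  have H := hasFDerivAt_snd.fst.prodMk (h2.prodMk h3)
  have hpsi : psi2 = fun x : ℝ × ℝ × ℝ =>
      (x.2.1, ((x.1 * x.2.1 - x.2.2) * (x.2.1)⁻¹,
        x.2.2 * ((1 - x.2.1) * (x.2.1 - x.1 * x.2.1 + x.2.2))⁻¹)) := by
    funext x; simp [psi2, div_eq_mul_inv]
  rw [hpsi, H.fderiv, ← LinearMap.det_toMatrix B3, Matrix.det_fin_three]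
  simp only [LinearMap.toMatrix_apply, B3, Module.Basis.ofEquivFun_repr_apply, Module.Basis.coe_ofEquivFun,
    eFin3_apply, eFin3_symm_apply, LinearEquiv.coe_mk, LinearEquiv.coe_symm_mk, ContinuousLinearMap.coe_coe,
    ContinuousLinearMap.prod_apply, ContinuousLinearMap.add_apply, ContinuousLinearMap.sub_apply,
    ContinuousLinearMap.smul_apply, ContinuousLinearMap.comp_apply,
    ContinuousLinearMap.coe_fst', ContinuousLinearMap.coe_snd',
    ContinuousLinearMap.smulRight_apply, ContinuousLinearMap.one_apply,
    ContinuousLinearMap.zero_apply, Pi.single_apply, Matrix.cons_val_zero,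
    Matrix.cons_val_one, Matrix.cons_val_two, Matrix.head_cons, Matrix.vecTail, Matrix.vecHead,
    smul_eq_mul, Prod.fst, Prod.snd]
  norm_num [Fin.ext_iff]
  obtain ⟨h1b, h2b⟩ := mul_ne_zero_iff.mp hD
  have : b * (1 - a) + c ≠ 0 := by intro h; apply h2b; linarith
  field_simp
  ring

lemma D_pos (a b c : ℝ) (ha : 0 < a) (hb : 0 < b) (hc : 0 < c)
    (h1 : c < a * b) (h2 : c < (1 - a) * (1 - b)) :
    0 < (1 - a) * (a - a * b + c) := by
  have hst : 0 < (1 - a) * (1 - b) := hc.trans h2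
  rcases mul_pos_iff.mp hst with ⟨hsa, hsb⟩ | ⟨hsa, hsb⟩
  · exact mul_pos hsa (by nlinarith)
  · exact mul_pos_of_neg_of_neg hsa (by nlinarith)

/-- The absolute value of the Jacobian determinant of `ψᵢ` at a point `x ∈ H` equals
`1 / ((1 - xᵢ)(xᵢ - x₁x₂ + x₃))`, for `i = 1, 2`. -/
theorem psi_jacobian :
    (∀ x ∈ setH,
      |LinearMap.det ((fderiv ℝ psi1 x) : (ℝ × ℝ × ℝ) →ₗ[ℝ] (ℝ × ℝ × ℝ))|
        = 1 / ((1 - x.1) * (x.1 - x.1 * x.2.1 + x.2.2))) ∧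
    (∀ x ∈ setH,
      |LinearMap.det ((fderiv ℝ psi2 x) : (ℝ × ℝ × ℝ) →ₗ[ℝ] (ℝ × ℝ × ℝ))|
        = 1 / ((1 - x.2.1) * (x.2.1 - x.1 * x.2.1 + x.2.2))) := by
  constructor
  · rintro ⟨a, b, c⟩ ⟨ha, hb, hc, h1, h2⟩
    have hD : 0 < (1 - a) * (a - a * b + c) := D_pos a b c ha hb hc h1 h2
    rw [det_psi1 a b c ha.ne' hD.ne']
    exact abs_of_pos (by positivity)
  · rintro ⟨a, b, c⟩ ⟨ha, hb, hc, h1, h2⟩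
    have hD : 0 < (1 - b) * (b - a * b + c) := by
      have := D_pos b a c hb ha hc (by rwa [mul_comm]) (by rw [mul_comm (1-b) (1-a)]; exact h2)
      nlinarith [this]
    rw [det_psi2 a b c hb.ne' hD.ne', abs_neg]
    exact abs_of_pos (by positivity)
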